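/- arXiv:1901.01226 — 3 statements merged into one kernel-verified Lean document; each statement's English description precedes it below -/
import Mathlib

section
/- Let D be a relative derivation of Rees(A) and let n ∈ Λ. Then there is a unique ℂ-linear derivation θ_n : A → A such that for every μ ∈ Λ and every a ∈ A_{≤μ}, θ_n(a) equals the coefficient at n+μ of the element D(a t^μ) of Rees(A). In particular the value prescribed by this formula is independent of the choice of μ with a ∈ A_{≤μ}, the resulting map θ_n is a derivation of A, and θ_n belongs to Derv(A)_{≤n}. -/
set_option synthInstance.maxHeartbeats 1000000
set_option maxHeartbeats 1000000

noncomputable section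

/-- An exhaustive multiplicative `Λ`-filtration (`Λ = ℤ^r`, partially ordered by the
submonoid `Λ⁺` generated by `α₁,…,α_r`, with every element of `Λ` a difference of two
elements of `Λ⁺`) on a commutative `ℂ`-algebra `A`. -/
structure MultiFiltration (r : ℕ) (α : Fin r → (Fin r → ℤ)) (A : Type*)
    [CommRing A] [Algebra ℂ A] : Type _ where
  F : (Fin r → ℤ) → Submodule ℂ A
  mono : ∀ μ lam : Fin r → ℤ,
    lam - μ ∈ AddSubmonoid.closure (Set.range α) → F μ ≤ F lam
  one_mem : (1 : A) ∈ F 0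
  mul_mem : ∀ μ ν : Fin r → ℤ, ∀ x ∈ F μ, ∀ y ∈ F ν, x * y ∈ F (μ + ν)
  exhaustive : ∀ x : A, ∃ lam, x ∈ F lam
  directed : ∀ lam : Fin r → ℤ, ∃ p ∈ AddSubmonoid.closure (Set.range α),
    ∃ q ∈ AddSubmonoid.closure (Set.range α), lam = p - q

namespace MultiFiltration

variable {r : ℕ} {α : Fin r → (Fin r → ℤ)} {A : Type*} [CommRing A] [Algebra ℂ A]
variable (𝓕 : MultiFiltration r α A)

/-- The Rees algebra `Rees(A) = ⊕_λ A_{≤λ} t^λ`, as a `ℂ`-subalgebra of the monoid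
algebra of `Λ = ℤ^r` over `A`. -/
def ReesAlg : Subalgebra ℂ (AddMonoidAlgebra A (Fin r → ℤ)) where
  carrier := {f | ∀ lam, f.coeff lam ∈ 𝓕.F lam}
  mul_mem' := by
    classical
    intro f g hf hg lam
    rw [AddMonoidAlgebra.coeff_mul]
    refine Submodule.sum_mem (𝓕.F lam) fun μ _ =>
      Submodule.sum_mem (𝓕.F lam) fun ν _ => ?_
    beta_reduce
    split_ifs with h
    · exact h ▸ 𝓕.mul_mem μ ν _ (hf μ) _ (hg ν)
    · exact (𝓕.F lam).zero_mem
  add_mem' := by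
    intro f g hf hg lam
    exact add_mem (hf lam) (hg lam)
  algebraMap_mem' := by
    classical
    intro x lam
    show (AddMonoidAlgebra.single 0 (algebraMap ℂ A x)).coeff lam ∈ 𝓕.F lam
    rw [AddMonoidAlgebra.coeff_single, Finsupp.single_apply]
    split_ifs with h
    · exact h ▸ (by rw [Algebra.algebraMap_eq_smul_one]; exact (𝓕.F 0).smul_mem x 𝓕.one_mem)
    · exact (𝓕.F lam).zero_mem

variable {𝓕}

theorem mem_ReesAlg {f : AddMonoidAlgebra A (Fin r → ℤ)} :
    f ∈ 𝓕.ReesAlg ↔ ∀ lam, f.coeff lam ∈ 𝓕.F lam := Iff.rfl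

variable (𝓕)

/-- The element `x t^μ` of the Rees algebra, for `x ∈ A_{≤μ}`. -/
def singleMem (μ : Fin r → ℤ) (x : A) (hx : x ∈ 𝓕.F μ) : 𝓕.ReesAlg :=
  ⟨AddMonoidAlgebra.single μ x, by
    classical
    intro lam
    show (AddMonoidAlgebra.single μ x).coeff lam ∈ 𝓕.F lam
    rw [AddMonoidAlgebra.coeff_single, Finsupp.single_apply]
    split_ifs with h
    · exact h ▸ hx
    · exact (𝓕.F lam).zero_mem⟩

/-- The element `t^{α_i}` of the Rees algebra. -/
def tpow (i : Fin r) : 𝓕.ReesAlg :=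
  𝓕.singleMem (α i) 1
    (𝓕.mono 0 (α i) (by simpa using AddSubmonoid.subset_closure (Set.mem_range_self i)) 𝓕.one_mem)

/-- The filtration `Derv(A)_{≤λ}` on `ℂ`-linear derivations of `A`. -/
def DervLE (lam : Fin r → ℤ) : Submodule ℂ (Derivation ℂ A A) where
  carrier := {θ | ∀ μ : Fin r → ℤ, ∀ x ∈ 𝓕.F μ, θ x ∈ 𝓕.F (μ + lam)}
  add_mem' := by
    intro θ η hθ hη μ x hx
    simpa using add_mem (hθ μ x hx) (hη μ x hx)
  zero_mem' := by
    intro μ x hx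
    simp
  smul_mem' := by
    intro c θ hθ μ x hx
    simpa using (𝓕.F (μ + lam)).smul_mem c (hθ μ x hx)

variable {𝓕}

theorem mem_DervLE {θ : Derivation ℂ A A} {lam : Fin r → ℤ} :
    θ ∈ 𝓕.DervLE lam ↔ ∀ μ : Fin r → ℤ, ∀ x ∈ 𝓕.F μ, θ x ∈ 𝓕.F (μ + lam) := Iff.rfl

end MultiFiltration

end

noncomputable section Aux

namespace MultiFiltrationAux

open MultiFiltration

variable {r : ℕ} {α : Fin r → (Fin r → ℤ)} {A : Type*} [CommRing A] [Algebra ℂ A]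
variable (𝓕 : MultiFiltration r α A)

lemma coe_singleMem (μ : Fin r → ℤ) (x : A) (hx : x ∈ 𝓕.F μ) :
    ((𝓕.singleMem μ x hx : 𝓕.ReesAlg) : AddMonoidAlgebra A (Fin r → ℤ)) =
      AddMonoidAlgebra.single μ x := rfl

lemma singleMem_mul (μ ν : Fin r → ℤ) (x y : A) (hx : x ∈ 𝓕.F μ) (hy : y ∈ 𝓕.F ν) :
    𝓕.singleMem μ x hx * 𝓕.singleMem ν y hy =
      𝓕.singleMem (μ + ν) (x * y) (𝓕.mul_mem μ ν x hx y hy) := by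
  apply Subtype.ext
  show (AddMonoidAlgebra.single μ x) * (AddMonoidAlgebra.single ν y) = _
  rw [AddMonoidAlgebra.single_mul_single]
  rfl

lemma one_mem_F (ν : Fin r → ℤ) (hν : ν ∈ AddSubmonoid.closure (Set.range α)) :
    (1 : A) ∈ 𝓕.F ν :=
  𝓕.mono 0 ν (by simpa using hν) 𝓕.one_mem

variable (D : Derivation ℂ (𝓕.ReesAlg) (𝓕.ReesAlg)) (hD : ∀ i : Fin r, D (𝓕.tpow i) = 0)

include hD in
lemma D_t_eq_zero (ν : Fin r → ℤ) (hν : ν ∈ AddSubmonoid.closure (Set.range α))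
    (h1 : (1 : A) ∈ 𝓕.F ν) : D (𝓕.singleMem ν 1 h1) = 0 := by
  revert h1
  induction hν using AddSubmonoid.closure_induction with
  | mem x hx =>
    intro h1
    obtain ⟨i, rfl⟩ := hx
    exact hD i
  | zero =>
    intro h1
    have : 𝓕.singleMem 0 1 h1 = 1 := by
      apply Subtype.ext
      show AddMonoidAlgebra.single (0 : Fin r → ℤ) (1 : A) = 1
      rfl
    rw [this]
    exact D.map_one_eq_zero
  | add a b ha hb iha ihb =>
    intro h1
    have ha1 := one_mem_F 𝓕 a ha
    have hb1 := one_mem_F 𝓕 b hb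
    have : 𝓕.singleMem (a + b) 1 h1 = 𝓕.singleMem a 1 ha1 * 𝓕.singleMem b 1 hb1 := by
      rw [singleMem_mul]
      congr 1
      exact (one_mul 1).symm
    rw [this, D.leibniz, iha ha1, ihb hb1]
    simp

include hD in
/-- Shifting the exponent by an element of the positive cone does not change the
relevant coefficient of `D (x t^μ)`. -/
lemma coeff_shift (n μ ν : Fin r → ℤ) (hν : ν ∈ AddSubmonoid.closure (Set.range α))
    (x : A) (hx : x ∈ 𝓕.F μ) (hx' : x ∈ 𝓕.F (μ + ν)) :
    ((D (𝓕.singleMem (μ + ν) x hx') : 𝓕.ReesAlg) : AddMonoidAlgebra A (Fin r → ℤ)).coeff (n + (μ + ν))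
      = ((D (𝓕.singleMem μ x hx) : 𝓕.ReesAlg) : AddMonoidAlgebra A (Fin r → ℤ)).coeff (n + μ) := by
  have h1 : (1 : A) ∈ 𝓕.F ν := one_mem_F 𝓕 ν hν
  have key : 𝓕.singleMem (μ + ν) x hx' = 𝓕.singleMem μ x hx * 𝓕.singleMem ν 1 h1 := by
    rw [singleMem_mul]
    congr 1
    exact (mul_one x).symm
  rw [key, D.leibniz, D_t_eq_zero 𝓕 D hD ν hν h1]
  simp only [smul_eq_mul, mul_zero, zero_add]
  have : ((𝓕.singleMem ν 1 h1 * D (𝓕.singleMem μ x hx) : 𝓕.ReesAlg) :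
      AddMonoidAlgebra A (Fin r → ℤ)) =
      AddMonoidAlgebra.single ν (1 : A) *
        ((D (𝓕.singleMem μ x hx) : 𝓕.ReesAlg) : AddMonoidAlgebra A (Fin r → ℤ)) := rfl
  rw [this, AddMonoidAlgebra.coeff_single_mul_apply, one_mul]
  congr 1
  abel

lemma coeff_congr (n : Fin r → ℤ) {lam₁ lam₂ : Fin r → ℤ} (h : lam₁ = lam₂) (x : A)
    (hx₁ : x ∈ 𝓕.F lam₁) (hx₂ : x ∈ 𝓕.F lam₂) :
    ((D (𝓕.singleMem lam₁ x hx₁) : 𝓕.ReesAlg) : AddMonoidAlgebra A (Fin r → ℤ)).coeff (n + lam₁)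
      = ((D (𝓕.singleMem lam₂ x hx₂) : 𝓕.ReesAlg) : AddMonoidAlgebra A (Fin r → ℤ)).coeff (n + lam₂) := by
  subst h; rfl

include hD in
/-- Independence of the choice of `μ`. -/
lemma coeff_well_defined (n : Fin r → ℤ) (μ₁ μ₂ : Fin r → ℤ) (x : A)
    (h₁ : x ∈ 𝓕.F μ₁) (h₂ : x ∈ 𝓕.F μ₂) :
    ((D (𝓕.singleMem μ₁ x h₁) : 𝓕.ReesAlg) : AddMonoidAlgebra A (Fin r → ℤ)).coeff (n + μ₁)
      = ((D (𝓕.singleMem μ₂ x h₂) : 𝓕.ReesAlg) : AddMonoidAlgebra A (Fin r → ℤ)).coeff (n + μ₂) := by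
  obtain ⟨p, hp, q, hq, hpq⟩ := 𝓕.directed (μ₂ - μ₁)
  have heq : μ₁ + p = μ₂ + q := by
    have : μ₂ - μ₁ = p - q := hpq
    have := sub_eq_sub_iff_add_eq_add.mp this.symm
    linear_combination this
  have hx₁ : x ∈ 𝓕.F (μ₁ + p) := 𝓕.mono μ₁ (μ₁ + p) (by simpa using hp) h₁
  have hx₂ : x ∈ 𝓕.F (μ₂ + q) := heq ▸ hx₁
  rw [← coeff_shift 𝓕 D hD n μ₁ p hp x h₁ hx₁, ← coeff_shift 𝓕 D hD n μ₂ q hq x h₂ hx₂]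
  exact coeff_congr 𝓕 D n heq x hx₁ hx₂

/-- The underlying function of `θ_n`. -/
def thetaFun (n : Fin r → ℤ) (x : A) : A :=
  ((D (𝓕.singleMem (𝓕.exhaustive x).choose x (𝓕.exhaustive x).choose_spec) : 𝓕.ReesAlg) :
    AddMonoidAlgebra A (Fin r → ℤ)).coeff (n + (𝓕.exhaustive x).choose)

include hD in
lemma thetaFun_spec (n : Fin r → ℤ) (μ : Fin r → ℤ) (x : A) (hx : x ∈ 𝓕.F μ) :
    thetaFun 𝓕 D n x =
      ((D (𝓕.singleMem μ x hx) : 𝓕.ReesAlg) : AddMonoidAlgebra A (Fin r → ℤ)).coeff (n + μ) :=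
  coeff_well_defined 𝓕 D hD n _ μ x (𝓕.exhaustive x).choose_spec hx

include hD in
lemma thetaFun_add (n : Fin r → ℤ) (x y : A) :
    thetaFun 𝓕 D n (x + y) = thetaFun 𝓕 D n x + thetaFun 𝓕 D n y := by
  obtain ⟨μ, hμ⟩ := 𝓕.exhaustive x
  obtain ⟨ν, hν⟩ := 𝓕.exhaustive y
  obtain ⟨p, hp, q, hq, hpq⟩ := 𝓕.directed (μ - ν)
  have heq : ν + p = μ + q := (add_comm ν p).trans (sub_eq_sub_iff_add_eq_add.mp hpq).symm
  set lam := ν + p with hlam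
  have hx : x ∈ 𝓕.F lam :=
    𝓕.mono μ lam (by rw [show lam - μ = q by rw [hlam]; linear_combination heq]; exact hq) hμ
  have hy : y ∈ 𝓕.F lam :=
    𝓕.mono ν lam (by rw [show lam - ν = p by rw [hlam]; abel]; exact hp) hν
  have hxy : x + y ∈ 𝓕.F lam := add_mem hx hy
  rw [thetaFun_spec 𝓕 D hD n lam x hx, thetaFun_spec 𝓕 D hD n lam y hy,
    thetaFun_spec 𝓕 D hD n lam (x + y) hxy]
  have : 𝓕.singleMem lam (x + y) hxy = 𝓕.singleMem lam x hx + 𝓕.singleMem lam y hy := by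
    apply Subtype.ext
    show AddMonoidAlgebra.single lam (x + y) = AddMonoidAlgebra.single lam x +
      AddMonoidAlgebra.single lam y
    exact AddMonoidAlgebra.single_add lam x y
  rw [this, D.map_add]
  rfl

include hD in
lemma thetaFun_smul (n : Fin r → ℤ) (c : ℂ) (x : A) :
    thetaFun 𝓕 D n (c • x) = c • thetaFun 𝓕 D n x := by
  obtain ⟨μ, hμ⟩ := 𝓕.exhaustive x
  have hcx : c • x ∈ 𝓕.F μ := (𝓕.F μ).smul_mem c hμ
  rw [thetaFun_spec 𝓕 D hD n μ x hμ, thetaFun_spec 𝓕 D hD n μ (c • x) hcx]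
  have : 𝓕.singleMem μ (c • x) hcx = c • 𝓕.singleMem μ x hμ := by
    apply Subtype.ext
    show AddMonoidAlgebra.single μ (c • x) = c • AddMonoidAlgebra.single μ x
    rw [AddMonoidAlgebra.smul_single]
  rw [this, D.map_smul]
  rfl

include hD in
lemma thetaFun_one (n : Fin r → ℤ) : thetaFun 𝓕 D n 1 = 0 := by
  rw [thetaFun_spec 𝓕 D hD n 0 1 𝓕.one_mem]
  have : 𝓕.singleMem 0 1 𝓕.one_mem = 1 := by
    apply Subtype.ext
    show AddMonoidAlgebra.single (0 : Fin r → ℤ) (1 : A) = 1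
    rfl
  rw [this, D.map_one_eq_zero]
  rfl

include hD in
lemma thetaFun_mul (n : Fin r → ℤ) (x y : A) :
    thetaFun 𝓕 D n (x * y) = x * thetaFun 𝓕 D n y + y * thetaFun 𝓕 D n x := by
  obtain ⟨μ, hμ⟩ := 𝓕.exhaustive x
  obtain ⟨ν, hν⟩ := 𝓕.exhaustive y
  have hxy : x * y ∈ 𝓕.F (μ + ν) := 𝓕.mul_mem μ ν x hμ y hν
  rw [thetaFun_spec 𝓕 D hD n (μ + ν) (x * y) hxy, thetaFun_spec 𝓕 D hD n μ x hμ,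
    thetaFun_spec 𝓕 D hD n ν y hν]
  have key : 𝓕.singleMem (μ + ν) (x * y) hxy = 𝓕.singleMem μ x hμ * 𝓕.singleMem ν y hν :=
    (singleMem_mul 𝓕 μ ν x y hμ hν).symm
  rw [key, D.leibniz]
  have e1 : (((𝓕.singleMem μ x hμ • D (𝓕.singleMem ν y hν) : 𝓕.ReesAlg)) :
      AddMonoidAlgebra A (Fin r → ℤ)) =
      AddMonoidAlgebra.single μ x *
        ((D (𝓕.singleMem ν y hν) : 𝓕.ReesAlg) : AddMonoidAlgebra A (Fin r → ℤ)) := rfl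
  have e2 : (((𝓕.singleMem ν y hν • D (𝓕.singleMem μ x hμ) : 𝓕.ReesAlg)) :
      AddMonoidAlgebra A (Fin r → ℤ)) =
      AddMonoidAlgebra.single ν y *
        ((D (𝓕.singleMem μ x hμ) : 𝓕.ReesAlg) : AddMonoidAlgebra A (Fin r → ℤ)) := rfl
  show ((𝓕.singleMem μ x hμ • D (𝓕.singleMem ν y hν) : 𝓕.ReesAlg) :
      AddMonoidAlgebra A (Fin r → ℤ)).coeff (n + (μ + ν)) +
    ((𝓕.singleMem ν y hν • D (𝓕.singleMem μ x hμ) : 𝓕.ReesAlg) :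
      AddMonoidAlgebra A (Fin r → ℤ)).coeff (n + (μ + ν)) = _
  rw [e1, e2, AddMonoidAlgebra.coeff_single_mul_apply, AddMonoidAlgebra.coeff_single_mul_apply]
  have h1 : -μ + (n + (μ + ν)) = n + ν := by abel
  have h2 : -ν + (n + (μ + ν)) = n + μ := by abel
  rw [h1, h2]

/-- The derivation `θ_n`. -/
def theta (n : Fin r → ℤ) : Derivation ℂ A A where
  toFun := thetaFun 𝓕 D n
  map_add' := thetaFun_add 𝓕 D hD n
  map_smul' := thetaFun_smul 𝓕 D hD n
  map_one_eq_zero' := thetaFun_one 𝓕 D hD n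
  leibniz' := by
    intro x y
    simp only [smul_eq_mul, LinearMap.coe_mk, AddHom.coe_mk]
    rw [thetaFun_mul 𝓕 D hD n x y]

lemma theta_apply (n : Fin r → ℤ) (x : A) : theta 𝓕 D hD n x = thetaFun 𝓕 D n x := rfl

end MultiFiltrationAux

end Aux

open MultiFiltration in
/-- Let `D` be a relative derivation of `Rees(A)` and `n ∈ Λ`.  There
is a unique `ℂ`-linear derivation `θ_n : A → A` such that for `a ∈ A_{≤μ}`, `θ_n(a)` is
the coefficient at `n + μ` of `D(a t^μ)`; moreover `θ_n ∈ Derv(A)_{≤n}`. -/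
theorem relative_derivation_coefficient_derivation
    {r : ℕ} (hr : 1 ≤ r) {α : Fin r → (Fin r → ℤ)} {A : Type*} [CommRing A] [Algebra ℂ A]
    (𝓕 : MultiFiltration r α A)
    (D : Derivation ℂ (𝓕.ReesAlg) (𝓕.ReesAlg)) (hD : ∀ i : Fin r, D (𝓕.tpow i) = 0)
    (n : Fin r → ℤ) :
    ∃ θ : Derivation ℂ A A,
      (∀ (μ : Fin r → ℤ) (x : A) (hx : x ∈ 𝓕.F μ),
        θ x = ((D (𝓕.singleMem μ x hx) : 𝓕.ReesAlg) : AddMonoidAlgebra A (Fin r → ℤ)).coeff (n + μ)) ∧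
      (θ ∈ 𝓕.DervLE n) ∧
      (∀ θ' : Derivation ℂ A A,
        (∀ (μ : Fin r → ℤ) (x : A) (hx : x ∈ 𝓕.F μ),
          θ' x = ((D (𝓕.singleMem μ x hx) : 𝓕.ReesAlg) : AddMonoidAlgebra A (Fin r → ℤ)).coeff (n + μ))
        → θ' = θ) := by
  classical
  refine ⟨MultiFiltrationAux.theta 𝓕 D hD n, ?_, ?_, ?_⟩
  · intro μ x hx
    rw [MultiFiltrationAux.theta_apply, MultiFiltrationAux.thetaFun_spec 𝓕 D hD n μ x hx]
  · intro μ x hx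
    rw [MultiFiltrationAux.theta_apply, MultiFiltrationAux.thetaFun_spec 𝓕 D hD n μ x hx]
    have h := (D (𝓕.singleMem μ x hx)).2 (n + μ)
    rw [add_comm μ n]
    exact h
  · intro θ' hθ'
    ext x
    obtain ⟨μ, hμ⟩ := 𝓕.exhaustive x
    rw [hθ' μ x hμ, MultiFiltrationAux.theta_apply,
      MultiFiltrationAux.thetaFun_spec 𝓕 D hD n μ x hμ]
end

section
/- Every ℂ-linear derivation θ of the polynomial ring P = ℂ[a,b,c,d] satisfying θ(ad − bc) = 0 can be written as a P-linear combination of the six derivations c∂_a + d∂_b, b∂_a + d∂_c, a∂_a − d∂_d, b∂_b − c∂_c, a∂_b + c∂_d, and a∂_c + b∂_d. That is, the P-module of derivations of P annihilating the determinant ad − bc is generated by these six derivations. -/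
open MvPolynomial

noncomputable section

/-- The polynomial ring `P = ℂ[a,b,c,d]`. -/
abbrev P : Type := MvPolynomial (Fin 4) ℂ

def a : P := X 0
def b : P := X 1
def c : P := X 2
def d : P := X 3

/-- The partial derivative derivations. -/
def da : Derivation ℂ P P := pderiv 0
def db : Derivation ℂ P P := pderiv 1
def dc : Derivation ℂ P P := pderiv 2
def dd : Derivation ℂ P P := pderiv 3

/-- Substitution `X i ↦ 0`. -/
def Φ (i : Fin 4) : P →ₐ[ℂ] P := aeval (Function.update X i 0)

lemma Φ_X_self (i : Fin 4) : Φ i (X i) = 0 := by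
  simp [Φ]

lemma Φ_X_ne (i j : Fin 4) (h : j ≠ i) : Φ i (X j) = X j := by
  simp [Φ, Function.update_of_ne h]

lemma block (i : Fin 4) (p : P) : ∃ u : P, p = Φ i p + X i * u := by
  induction p using MvPolynomial.induction_on with
  | C r => exact ⟨0, by simp [Φ]⟩
  | add p q hp hq =>
    obtain ⟨u, hu⟩ := hp; obtain ⟨v, hv⟩ := hq
    exact ⟨u + v, by rw [map_add]; linear_combination hu + hv⟩
  | mul_X p j hp =>
    obtain ⟨u, hu⟩ := hp
    by_cases h : j = i
    · subst h
      exact ⟨p, by rw [map_mul, Φ_X_self]; ring⟩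
    · exact ⟨u * X j, by rw [map_mul, Φ_X_ne i j h]; linear_combination X j * hu⟩

lemma reg_a (k u v w : P) (h : X 0 * k = X 1 * u + X 2 * v + X 3 * w) :
    ∃ u' v' w' : P, k = X 1 * u' + X 2 * v' + X 3 * w' := by
  obtain ⟨w', hw⟩ := block 3 k
  obtain ⟨v', hv⟩ := block 2 (Φ 3 k)
  obtain ⟨u', hu⟩ := block 1 (Φ 2 (Φ 3 k))
  have hz : Φ 1 (Φ 2 (Φ 3 k)) = 0 := by
    have := congrArg (fun p => Φ 1 (Φ 2 (Φ 3 p))) h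
    simp only [map_mul, map_add] at this
    rw [Φ_X_ne 3 0 (by decide), Φ_X_ne 2 0 (by decide), Φ_X_ne 1 0 (by decide)] at this
    rw [Φ_X_ne 3 1 (by decide), Φ_X_ne 2 1 (by decide), Φ_X_self 1] at this
    rw [Φ_X_ne 3 2 (by decide), Φ_X_self 2] at this
    rw [Φ_X_self 3] at this
    simp only [map_zero, zero_mul, mul_zero, add_zero, zero_add] at this
    exact mul_left_cancel₀ (X_ne_zero (R := ℂ) 0) (by simpa using this)
  refine ⟨u', v', w', ?_⟩
  rw [hz] at hu
  rw [hw, hv, hu]; ring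

lemma reg_b (h u v : P) (heq : X 1 * h = X 2 * u + X 3 * v) :
    ∃ u' v' : P, h = X 2 * u' + X 3 * v' := by
  obtain ⟨v', hv⟩ := block 3 h
  obtain ⟨u', hu⟩ := block 2 (Φ 3 h)
  have hz : Φ 2 (Φ 3 h) = 0 := by
    have := congrArg (fun p => Φ 2 (Φ 3 p)) heq
    simp only [map_mul, map_add] at this
    rw [Φ_X_ne 3 1 (by decide), Φ_X_ne 2 1 (by decide)] at this
    rw [Φ_X_ne 3 2 (by decide), Φ_X_self 2, Φ_X_self 3] at this
    simp only [map_zero, zero_mul, mul_zero, add_zero, zero_add] at this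
    exact mul_left_cancel₀ (X_ne_zero (R := ℂ) 1) (by simpa using this)
  refine ⟨u', v', ?_⟩
  rw [hz] at hu
  rw [hv, hu]; ring

lemma reg_d (f g : P) (h : X 3 * f = X 2 * g) : ∃ p : P, f = X 2 * p ∧ g = X 3 * p := by
  obtain ⟨p, hp⟩ := block 2 f
  have hz : Φ 2 f = 0 := by
    have := congrArg (Φ 2) h
    simp only [map_mul] at this
    rw [Φ_X_ne 2 3 (by decide), Φ_X_self 2] at this
    simp only [zero_mul] at this
    exact mul_left_cancel₀ (X_ne_zero (R := ℂ) 3) (by simpa using this)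
  rw [hz, zero_add] at hp
  refine ⟨p, hp, ?_⟩
  have : X 2 * g = X 2 * (X 3 * p) := by rw [← h, hp]; ring
  exact mul_left_cancel₀ (X_ne_zero (R := ℂ) 2) this

lemma syz (f g h k : P) (H : X 3 * f - X 2 * g - X 1 * h + X 0 * k = 0) :
    ∃ p1 p2 p3 p4 p5 p6 : P,
      f = p1 * X 2 + p2 * X 1 + p3 * X 0 ∧
      g = p1 * X 3 + p4 * X 1 + p5 * X 0 ∧
      h = p2 * X 3 - p4 * X 2 + p6 * X 0 ∧
      k = -p3 * X 3 + p5 * X 2 + p6 * X 1 := by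
  obtain ⟨β, γ, δ, hk⟩ := reg_a k h g (-f) (by linear_combination H)
  set p6 := β; set p5 := γ; set p3 : P := -δ
  have H1 : X 3 * (f - p3 * X 0) - X 2 * (g - p5 * X 0) - X 1 * (h - p6 * X 0) = 0 := by
    linear_combination H - X 0 * hk
  obtain ⟨u', v', hh1⟩ := reg_b (h - p6 * X 0) (-(g - p5 * X 0)) (f - p3 * X 0)
    (by linear_combination -H1)
  set p4 : P := -u'; set p2 := v'
  have H2 : X 3 * (f - p3 * X 0 - p2 * X 1) = X 2 * (g - p5 * X 0 - p4 * X 1) := by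
    linear_combination H1 + X 1 * hh1
  obtain ⟨p1, hf2, hg2⟩ := reg_d _ _ H2
  exact ⟨p1, p2, p3, p4, p5, p6,
    by linear_combination hf2, by linear_combination hg2,
    by linear_combination hh1, by linear_combination hk⟩

set_option maxHeartbeats 1000000 in
theorem derivations_annihilating_det_generated
    (θ : Derivation ℂ P P) (hθ : θ (a * d - b * c) = 0) :
    ∃ p₁ p₂ p₃ p₄ p₅ p₆ : P,
      θ = p₁ • (c • da + d • db) + p₂ • (b • da + d • dc) + p₃ • (a • da - d • dd)
        + p₄ • (b • db - c • dc) + p₅ • (a • db + c • dd) + p₆ • (a • dc + b • dd) := by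
  have H : X 3 * θ (X 0) - X 2 * θ (X 1) - X 1 * θ (X 2) + X 0 * θ (X 3) = 0 := by
    have := hθ
    simp only [map_sub, Derivation.leibniz, a, b, c, d, smul_eq_mul] at this
    linear_combination this
  obtain ⟨p1, p2, p3, p4, p5, p6, hf, hg, hh, hk⟩ := syz _ _ _ _ H
  refine ⟨p1, p2, p3, p4, p5, p6, MvPolynomial.derivation_ext fun i => ?_⟩
  fin_cases i <;>
    simp only [Derivation.add_apply, Derivation.sub_apply, Derivation.smul_apply,
      da, db, dc, dd, a, b, c, d, pderiv_X, Pi.single_apply, Fin.isValue,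
      smul_eq_mul, smul_ite, smul_zero] <;>
    simp (config := { decide := true }) <;>
    [linear_combination hf; linear_combination hg; linear_combination hh; linear_combination hk]

end
end

section
/- Define the derivations of P = ℂ[a,b,c,d]: E_L = −(c∂_a + d∂_b), F_L = −(a∂_c + b∂_d), H_L = −a∂_a − b∂_b + c∂_c + d∂_d, E_R = a∂_b + c∂_d, F_R = b∂_a + d∂_c, H_R = a∂_a − b∂_b + c∂_c − d∂_d. Then the following identities of ℂ-linear endomorphisms of P hold (for every f ∈ P): (ad−bc)·E_R(f) = −a²·E_L(f) + c²·F_L(f) + ac·H_L(f); (ad−bc)·F_R(f) = b²·E_L(f) − d²·F_L(f) − bd·H_L(f); and (ad−bc)·H_R(f) = 2ab·E_L(f) − 2cd·F_L(f) − (ad+bc)·H_L(f). -/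
open MvPolynomial

noncomputable section

def EL : Derivation ℂ P P := -(c • da + d • db)
def FL : Derivation ℂ P P := -(a • dc + b • dd)
def HL : Derivation ℂ P P := -(a • da) - b • db + c • dc + d • dd
def ER : Derivation ℂ P P := a • db + c • dd
def FR : Derivation ℂ P P := b • da + d • dc
def HR : Derivation ℂ P P := a • da - b • db + c • dc - d • dd

/-- The identities expressing `(ad−bc)` times the right-invariant
vector fields in terms of the left-invariant ones. -/
theorem det_mul_right_fields_eq :
    (∀ f : P, (a * d - b * c) * ER f = -(a ^ 2 * EL f) + c ^ 2 * FL f + (a * c) * HL f) ∧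
    (∀ f : P, (a * d - b * c) * FR f = b ^ 2 * EL f - d ^ 2 * FL f - (b * d) * HL f) ∧
    (∀ f : P, (a * d - b * c) * HR f
      = 2 * (a * b) * EL f - 2 * (c * d) * FL f - (a * d + b * c) * HL f) := by
  refine ⟨fun f => ?_, fun f => ?_, fun f => ?_⟩ <;>
  · simp only [ER, FR, HR, EL, FL, HL, Derivation.add_apply, Derivation.sub_apply,
      Derivation.neg_apply, Derivation.smul_apply, smul_eq_mul]
    ring

end
end
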